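/- For any vertex (u_i,v_j) of G □ H, EM_{G□H}((u_i,v_j)) = EM_{H_i}(u_i-layer copy of v_j) ∪ EM_{G_j}(v_j-layer copy of u_i); i.e., the edges monitored by (u_i,v_j) in G□H are exactly the edges monitored within its H-layer and its G-layer. -/

import Mathlib

open SimpleGraph

/-- A set `M` of vertices is a distance-edge-monitoring set of `G`. -/
def demSet {V : Type*} (G : SimpleGraph V) (M : Set V) : Prop :=
  ∀ e ∈ G.edgeSet, ∃ x ∈ M, ∃ y : V, G.dist x y ≠ (G.deleteEdges {e}).dist x y

/-- The distance-edge-monitoring number of `G`. -/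
noncomputable def dem {V : Type*} (G : SimpleGraph V) [Fintype V] : ℕ :=
  sInf {k | ∃ M : Finset V, M.card = k ∧ demSet G ↑M}

/-- The set of edges of `G` monitored by the vertex `x`. -/
def EM {V : Type*} (G : SimpleGraph V) (x : V) : Set (Sym2 V) :=
  {e | e ∈ G.edgeSet ∧ ∃ v : V, G.dist x v ≠ (G.deleteEdges {e}).dist x v}

namespace StmtAux

open SimpleGraph Walk
open scoped Classical

variable {V W V' : Type*} {G : SimpleGraph V} {H : SimpleGraph W} {G' : SimpleGraph V'}


lemma edist_map_le (f : G →g G') (a b : V) : G'.edist (f a) (f b) ≤ G.edist a b := by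
  rcases eq_or_ne (G.edist a b) ⊤ with h | h
  · exact h ▸ le_top
  · obtain ⟨p, hp⟩ := exists_walk_of_edist_ne_top h
    calc G'.edist (f a) (f b) ≤ ((p.map f).length : ℕ∞) := edist_le _
      _ = (p.length : ℕ∞) := by rw [Walk.length_map]
      _ = G.edist a b := hp

lemma edist_iso (f : G ≃g G') (a b : V) : G'.edist (f a) (f b) = G.edist a b := by
  refine le_antisymm (edist_map_le f.toHom a b) ?_
  have := edist_map_le f.symm.toHom (f a) (f b)
  simpa using this

lemma dist_iso (f : G ≃g G') (a b : V) : G'.dist (f a) (f b) = G.dist a b := by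
  simp only [SimpleGraph.dist, edist_iso]

/-- Iso between graphs with deleted edges. -/
def isoDelete (f : G ≃g G') (s : Set (Sym2 V)) :
    G.deleteEdges s ≃g G'.deleteEdges (Sym2.map f '' s) where
  toEquiv := f.toEquiv
  map_rel_iff' := by
    intro a b
    simp only [Equiv.coe_fn_mk, deleteEdges_adj]
    rw [show s(f.toEquiv a, f.toEquiv b) = Sym2.map (⇑f) s(a, b) from rfl,
      (Sym2.map.injective f.injective).mem_set_image]
    exact and_congr f.map_adj_iff Iff.rfl

lemma edist_le_one_add {a b c : V} (h : G.Adj a b) : G.edist a c ≤ 1 + G.edist b c := by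
  calc G.edist a c ≤ G.edist a b + G.edist b c := SimpleGraph.edist_triangle
    _ = 1 + G.edist b c := by rw [edist_eq_one_iff_adj.mpr h]

lemma EM_iso (f : G ≃g G') (x : V) (e : Sym2 V) :
    Sym2.map f e ∈ EM G' (f x) ↔ e ∈ EM G x := by
  have hdel : ∀ t : V, (G'.deleteEdges {Sym2.map f e}).dist (f x) (f t)
      = (G.deleteEdges {e}).dist x t := by
    intro t
    have h1 : ({Sym2.map f e} : Set (Sym2 V')) = Sym2.map f '' {e} := by simp
    rw [h1]
    exact dist_iso (isoDelete f {e}) x t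
  constructor
  · rintro ⟨he, t', ht'⟩
    refine ⟨f.map_mem_edgeSet_iff.mp he, f.symm t', ?_⟩
    rw [show t' = f (f.symm t') by simp] at ht'
    rwa [dist_iso f, hdel] at ht'
  · rintro ⟨he, t, ht⟩
    exact ⟨f.map_mem_edgeSet_iff.mpr he, f t, by rwa [dist_iso f, hdel]⟩

lemma boxProd_walk_le {s t : V × W} (p : (G □ H).Walk s t) :
    G.edist s.1 t.1 + H.edist s.2 t.2 ≤ (p.length : ℕ∞) := by
  induction p with
  | nil => simp [edist_self]
  | @cons s m t h q ih =>
    rw [Walk.length_cons]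
    push_cast
    rcases boxProd_adj.mp h with ⟨hg, he⟩ | ⟨hh, he⟩
    · calc G.edist s.1 t.1 + H.edist s.2 t.2
          ≤ (1 + G.edist m.1 t.1) + H.edist m.2 t.2 := by
            rw [he]; exact add_le_add_left (edist_le_one_add hg) _
        _ = 1 + (G.edist m.1 t.1 + H.edist m.2 t.2) := by ring
        _ ≤ 1 + (q.length : ℕ∞) := add_le_add_right ih _
        _ = (q.length : ℕ∞) + 1 := by ring
    · calc G.edist s.1 t.1 + H.edist s.2 t.2
          ≤ G.edist m.1 t.1 + (1 + H.edist m.2 t.2) := by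
            rw [he]; exact add_le_add_right (edist_le_one_add hh) _
        _ = 1 + (G.edist m.1 t.1 + H.edist m.2 t.2) := by ring
        _ ≤ 1 + (q.length : ℕ∞) := add_le_add_right ih _
        _ = (q.length : ℕ∞) + 1 := by ring

lemma boxProd_edist (hG : G.Connected) (hH : H.Connected) (a a' : V) (b b' : W) :
    (G □ H).edist (a, b) (a', b') = G.edist a a' + H.edist b b' := by
  refine le_antisymm ?_ ?_
  · obtain ⟨p, hp⟩ := (hG a a').exists_walk_length_eq_edist
    obtain ⟨q, hq⟩ := (hH b b').exists_walk_length_eq_edist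
    calc (G □ H).edist (a, b) (a', b')
        ≤ (((p.boxProdLeft H b).append (q.boxProdRight G a')).length : ℕ∞) := edist_le _
      _ = ((p.length + q.length : ℕ) : ℕ∞) := by
          rw [Walk.length_append, show (p.boxProdLeft H b).length = p.length from Walk.length_map _ _,
            show (q.boxProdRight G a').length = q.length from Walk.length_map _ _]
      _ = G.edist a a' + H.edist b b' := by push_cast [hp, hq]; rfl
  · rcases eq_or_ne ((G □ H).edist (a, b) (a', b')) ⊤ with h | h
    · simp [h]
    · obtain ⟨r, hr⟩ := exists_walk_of_edist_ne_top h
      rw [← hr]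
      exact boxProd_walk_le r

lemma boxProd_dist (hG : G.Connected) (hH : H.Connected) (a a' : V) (b b' : W) :
    (G □ H).dist (a, b) (a', b') = G.dist a a' + H.dist b b' := by
  have h1 : G.edist a a' ≠ ⊤ := edist_ne_top_iff_reachable.mpr (hG a a')
  have h2 : H.edist b b' ≠ ⊤ := edist_ne_top_iff_reachable.mpr (hH b b')
  simp only [SimpleGraph.dist, boxProd_edist hG hH, ENat.toNat_add h1 h2]

lemma dist_eq_of_walk {G₁ G₂ : SimpleGraph V} (hle : G₁ ≤ G₂) {a b : V}
    (p : G₁.Walk a b) (hp : p.length = G₂.dist a b) : G₁.dist a b = G₂.dist a b := by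
  refine le_antisymm (hp ▸ dist_le p) ?_
  have hr : G₁.Reachable a b := ⟨p⟩
  obtain ⟨q, hq⟩ := hr.exists_walk_length_eq_dist
  calc G₂.dist a b ≤ (q.mapLe hle).length := dist_le _
    _ = q.length := Walk.length_map _ _
    _ = G₁.dist a b := hq


lemma edist_le_one_add' {a b c : V} (h : G.Adj a b) : G.edist a c ≤ 1 + G.edist b c := by
  calc G.edist a c ≤ G.edist a b + G.edist b c := SimpleGraph.edist_triangle
    _ = 1 + G.edist b c := by rw [edist_eq_one_iff_adj.mpr h]

lemma key_lower (v : W) (e' : Sym2 V) (x : V) {z y : V × W}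
    (p : ((G □ H).deleteEdges {Sym2.map (fun c => (c, v)) e'}).Walk z y)
    (hy : y = (x, v)) :
    min ((G.deleteEdges {e'}).edist z.1 x + H.edist z.2 v)
        (G.edist z.1 x + (if z.2 = v then 2 else H.edist z.2 v)) ≤ (p.length : ℕ∞) := by
  induction p with
  | nil => subst hy; simp [SimpleGraph.edist_self]
  | @cons z m y h q ih =>
    have ih := ih hy
    subst hy
    rw [Walk.length_cons]
    push_cast
    set A := fun w : V × W => (G.deleteEdges {e'}).edist w.1 x + H.edist w.2 v with hA
    set B := fun w : V × W => G.edist w.1 x + (if w.2 = v then 2 else H.edist w.2 v) with hB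
    suffices hstep : min (A z) (B z) ≤ 1 + min (A m) (B m) by
      calc min (A z) (B z) ≤ 1 + min (A m) (B m) := hstep
        _ ≤ 1 + (q.length : ℕ∞) := add_le_add_right ih _
        _ = (q.length : ℕ∞) + 1 := by ring
    rw [← min_add_add_left]
    obtain ⟨z1, z2⟩ := z
    obtain ⟨m1, m2⟩ := m
    simp only [deleteEdges_adj, Set.mem_singleton_iff] at h
    obtain ⟨hadj, hne⟩ := h
    rcases boxProd_adj.mp hadj with ⟨hg, he⟩ | ⟨hh, he⟩
    · -- G-step
      simp only at hg he
      subst he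
      by_cases hev : s(z1, m1) = e'
      · -- the deleted G-edge, used in another row
        have hz2 : z2 ≠ v := by
          rintro rfl
          exact hne (by rw [← hev, Sym2.map_pair_eq])
        refine min_le_of_right_le (le_min ?_ ?_)
        · -- B (z1,z2) ≤ 1 + A (m1,z2)
          simp only [hA, hB, if_neg hz2]
          calc G.edist z1 x + H.edist z2 v
              ≤ (1 + G.edist m1 x) + H.edist z2 v :=
                add_le_add_left (edist_le_one_add' hg) _
            _ ≤ (1 + (G.deleteEdges {e'}).edist m1 x) + H.edist z2 v :=
                add_le_add_left (add_le_add_right (edist_anti (G.deleteEdges_le {e'})) 1) _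
            _ = 1 + ((G.deleteEdges {e'}).edist m1 x + H.edist z2 v) := by ring
        · -- B (z1,z2) ≤ 1 + B (m1,z2)
          simp only [hA, hB, if_neg hz2]
          calc G.edist z1 x + H.edist z2 v
              ≤ (1 + G.edist m1 x) + H.edist z2 v :=
                add_le_add_left (edist_le_one_add' hg) _
            _ = 1 + (G.edist m1 x + H.edist z2 v) := by ring
      · -- an undeleted G-edge
        have hadj' : (G.deleteEdges {e'}).Adj z1 m1 := by
          rw [deleteEdges_adj]; exact ⟨hg, by simpa using hev⟩
        refine min_le_min ?_ ?_
        · simp only [hA]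
          calc (G.deleteEdges {e'}).edist z1 x + H.edist z2 v
              ≤ (1 + (G.deleteEdges {e'}).edist m1 x) + H.edist z2 v :=
                add_le_add_left (edist_le_one_add' hadj') _
            _ = 1 + ((G.deleteEdges {e'}).edist m1 x + H.edist z2 v) := by ring
        · simp only [hB]
          calc G.edist z1 x + (if z2 = v then 2 else H.edist z2 v)
              ≤ (1 + G.edist m1 x) + (if z2 = v then 2 else H.edist z2 v) :=
                add_le_add_left (edist_le_one_add' hg) _
            _ = 1 + (G.edist m1 x + (if z2 = v then 2 else H.edist z2 v)) := by ring
    · -- H-step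
      simp only at hh he
      subst he
      refine min_le_min ?_ ?_
      · simp only [hA]
        calc (G.deleteEdges {e'}).edist z1 x + H.edist z2 v
            ≤ (G.deleteEdges {e'}).edist z1 x + (1 + H.edist m2 v) :=
              add_le_add_right (edist_le_one_add' hh) _
          _ = 1 + ((G.deleteEdges {e'}).edist z1 x + H.edist m2 v) := by ring
      · simp only [hB]
        by_cases hz2 : z2 = v
        · have hm2 : m2 ≠ v := by rintro rfl; subst hz2; exact hh.ne rfl
          rw [if_pos hz2, if_neg hm2]
          have h1 : (1 : ℕ∞) ≤ H.edist m2 v :=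
            ENat.one_le_iff_ne_zero.mpr (edist_eq_zero_iff.ne.mpr hm2)
          calc G.edist z1 x + 2 = G.edist z1 x + (1 + 1) := by norm_num
            _ ≤ G.edist z1 x + (1 + H.edist m2 v) := by gcongr
            _ = 1 + (G.edist z1 x + H.edist m2 v) := by ring
        · rw [if_neg hz2]
          by_cases hm2 : m2 = v
          · rw [if_pos hm2]
            have h1 : H.edist z2 v = 1 := by
              rw [← hm2]; exact edist_eq_one_iff_adj.mpr hh
            rw [h1]
            calc G.edist z1 x + 1 ≤ G.edist z1 x + (1 + 2) := by gcongr; norm_num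
              _ = 1 + (G.edist z1 x + 2) := by ring
          · rw [if_neg hm2]
            calc G.edist z1 x + H.edist z2 v
                ≤ G.edist z1 x + (1 + H.edist m2 v) :=
                  add_le_add_right (edist_le_one_add' hh) _
              _ = 1 + (G.edist z1 x + H.edist m2 v) := by ring

lemma mem_EM_boxProd (hG : G.Connected) (hH : H.Connected) (u : V) (v : W)
    {e' : Sym2 V} (he' : e' ∈ G.edgeSet) (x : V)
    (hx : G.dist u x ≠ (G.deleteEdges {e'}).dist u x) :
    Sym2.map (fun c => (c, v)) e' ∈ EM (G □ H) (u, v) := by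
  have hux : u ≠ x := by
    rintro rfl
    exact hx (by rw [SimpleGraph.dist_self, SimpleGraph.dist_self])
  constructor
  · revert he'
    refine Sym2.ind (fun c c' hcc => ?_) e'
    rw [Sym2.map_pair_eq]
    exact (mem_edgeSet _).mpr (boxProd_adj_left.mpr ((mem_edgeSet _).mp hcc))
  · refine ⟨(x, v), ?_⟩
    have hd : (G □ H).dist (u, v) (x, v) = G.dist u x := by
      rw [boxProd_dist hG hH, SimpleGraph.dist_self, add_zero]
    rw [hd]
    have hfin : G.edist u x ≠ ⊤ := edist_ne_top_iff_reachable.mpr (hG u x)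
    have hcast : ((G.dist u x : ℕ) : ℕ∞) = G.edist u x := ENat.coe_toNat hfin
    by_cases hr : ((G □ H).deleteEdges {Sym2.map (fun c => (c, v)) e'}).Reachable (u, v) (x, v)
    · obtain ⟨p, hp⟩ := hr.exists_walk_length_eq_dist
      intro hcon
      have hk := key_lower v e' x p rfl
      have hk' : min ((G.deleteEdges {e'}).edist u x) (G.edist u x + 2) ≤ (p.length : ℕ∞) := by
        simpa [SimpleGraph.edist_self] using hk
      rw [hp, ← hcon, hcast] at hk'
      have hlt1 : G.edist u x < (G.deleteEdges {e'}).edist u x := by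
        refine lt_of_le_of_ne (edist_anti (G.deleteEdges_le {e'})) fun hEq => hx ?_
        rw [SimpleGraph.dist, SimpleGraph.dist, hEq]
      have hlt2 : G.edist u x < G.edist u x + 2 := by
        conv_lhs => rw [← add_zero (G.edist u x)]
        exact WithTop.add_lt_add_left hfin zero_lt_two
      rcases min_le_iff.mp hk' with h | h
      · exact absurd h (not_le.mpr hlt1)
      · exact absurd h (not_le.mpr hlt2)
    · rw [dist_eq_zero_of_not_reachable hr]
      exact (hG.pos_dist_of_ne hux).ne'

lemma construct (hG : G.Connected) (hH : H.Connected) (u x : V) (v y : W)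
    {e : Sym2 (V × W)} {a a' : V} {b : W} (hE : e = s((a, b), (a', b))) (ha : a ≠ a')
    (pG : G.Walk u x) (hpG : pG.length = G.dist u x)
    (hrow : ∀ g ∈ pG.edges, Sym2.map (fun c => (c, v)) g ≠ e) :
    ((G □ H).deleteEdges {e}).dist (u, v) (x, y) = (G □ H).dist (u, v) (x, y) := by
  obtain ⟨pH, hpH⟩ := (hH v y).exists_walk_length_eq_dist
  set P := (pG.boxProdLeft H v).append (pH.boxProdRight G x) with hP
  have hEdges : ∀ f ∈ P.edges, f ∈ ((G □ H).deleteEdges {e}).edgeSet := by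
    intro f hf
    rw [edgeSet_deleteEdges]
    refine ⟨P.edges_subset_edgeSet hf, ?_⟩
    simp only [Set.mem_singleton_iff]
    rw [hP, Walk.edges_append] at hf
    rcases List.mem_append.mp hf with hf | hf
    · rw [show (pG.boxProdLeft H v).edges = pG.edges.map (Sym2.map (G.boxProdLeft H v).toHom) from Walk.edges_map _ _] at hf
      obtain ⟨g, hg, rfl⟩ := List.mem_map.mp hf
      exact hrow g hg
    · rw [show (pH.boxProdRight G x).edges = pH.edges.map (Sym2.map (G.boxProdRight H x).toHom) from Walk.edges_map _ _] at hf
      obtain ⟨g, hg, rfl⟩ := List.mem_map.mp hf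
      clear hg
      induction g using Sym2.ind with
      | _ d d' =>
        subst hE
        intro hEq
        rw [show Sym2.map ⇑(SimpleGraph.boxProdRight G H x).toHom s(d, d') = s((x, d), (x, d'))
          from by rw [Sym2.map_pair_eq]; rfl] at hEq
        rcases Sym2.eq_iff.mp hEq with ⟨h1, h2⟩ | ⟨h1, h2⟩
        · exact ha (((Prod.ext_iff.mp h1).1.symm).trans (Prod.ext_iff.mp h2).1)
        · exact ha (((Prod.ext_iff.mp h2).1.symm).trans (Prod.ext_iff.mp h1).1)
  have hlen : (P.transfer _ hEdges).length = (G □ H).dist (u, v) (x, y) := by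
    rw [Walk.length_transfer, hP, Walk.length_append,
      show (pG.boxProdLeft H v).length = pG.length from Walk.length_map _ _,
      show (pH.boxProdRight G x).length = pH.length from Walk.length_map _ _, hpG, hpH, boxProd_dist hG hH]
  exact dist_eq_of_walk (deleteEdges_le _) _ hlen

lemma exists_avoid_walk (hG : G.Connected) (e' : Sym2 V) (u x : V)
    (h : (G.deleteEdges {e'}).dist u x = G.dist u x) :
    ∃ q : G.Walk u x, q.length = G.dist u x ∧ ∀ g ∈ q.edges, g ≠ e' := by
  by_cases hux : u = x
  · subst hux
    exact ⟨Walk.nil, by simp [SimpleGraph.dist_self], by simp⟩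
  · have h0 : (G.deleteEdges {e'}).dist u x ≠ 0 := by
      rw [h]; exact (hG.pos_dist_of_ne hux).ne'
    obtain ⟨p, hp⟩ := exists_walk_of_dist_ne_zero h0
    have hsub : ∀ g ∈ p.edges, g ∈ G.edgeSet := by
      intro g hg
      have := p.edges_subset_edgeSet hg
      rw [edgeSet_deleteEdges] at this
      exact this.1
    refine ⟨p.transfer G hsub, by rw [Walk.length_transfer, hp, h], ?_⟩
    intro g hg
    rw [Walk.edges_transfer] at hg
    have := p.edges_subset_edgeSet hg
    rw [edgeSet_deleteEdges] at this
    exact this.2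

lemma gside (hG : G.Connected) (hH : H.Connected) (u : V) (v : W) {a a' : V} {b : W}
    (hadj : G.Adj a a') :
    s((a, b), (a', b)) ∈ EM (G □ H) (u, v) ↔ b = v ∧ s(a, a') ∈ EM G u := by
  constructor
  · rintro ⟨he, ⟨x, y⟩, hxy⟩
    have hb : b = v := by
      by_contra hb
      apply hxy
      obtain ⟨pG, hpG⟩ := (hG u x).exists_walk_length_eq_dist
      refine (construct hG hH u x v y rfl hadj.ne pG hpG ?_).symm
      intro g hg
      induction g using Sym2.ind with
      | _ c c' =>
        rw [Sym2.map_pair_eq]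
        intro hEq
        rcases Sym2.eq_iff.mp hEq with ⟨h1, h2⟩ | ⟨h1, h2⟩ <;>
          exact hb ((Prod.ext_iff.mp h1).2.symm)
    subst hb
    refine ⟨rfl, (mem_edgeSet _).mpr hadj, ?_⟩
    by_contra hmon
    push_neg at hmon
    apply hxy
    obtain ⟨pG, hpG, hpe⟩ := exists_avoid_walk hG s(a, a') u x (hmon x).symm
    refine (construct hG hH u x b y rfl hadj.ne pG hpG ?_).symm
    intro g hg hEq
    apply hpe g hg
    have : Sym2.map (fun c => (c, b)) g = Sym2.map (fun c => (c, b)) s(a, a') := by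
      rw [hEq, Sym2.map_pair_eq]
    exact Sym2.map.injective (fun c c' hcc => (Prod.ext_iff.mp hcc).1) this
  · rintro ⟨hb, hedge, x, hx⟩
    subst hb
    have := mem_EM_boxProd (G := G) (H := H) hG hH u b hedge x hx
    rwa [Sym2.map_pair_eq] at this

end StmtAux

open StmtAux in
theorem stmt_12 {V W : Type*} (G : SimpleGraph V) (H : SimpleGraph W)
    (hG : G.Connected) (hH : H.Connected) (u : V) (v : W) :
    EM (G □ H) (u, v) =
      (Sym2.map fun w : W => (u, w)) '' EM H v ∪
      (Sym2.map fun a : V => (a, v)) '' EM G u := by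
  ext e
  constructor
  · intro hmem
    have he : e ∈ (G □ H).edgeSet := hmem.1
    revert hmem he
    induction e using Sym2.ind with
    | _ p q =>
      intro hmem he
      obtain ⟨p1, p2⟩ := p
      obtain ⟨q1, q2⟩ := q
      rcases boxProd_adj.mp ((mem_edgeSet _).mp he) with ⟨hg, h2⟩ | ⟨hh, h1⟩
      · subst h2
        obtain ⟨hb, hEM⟩ := (gside hG hH u v hg).mp hmem
        exact Or.inr ⟨s(p1, q1), hEM, by rw [Sym2.map_pair_eq, hb]⟩
      · subst h1
        have hmem' := (EM_iso (boxProdComm G H) (u, v) s((p1, p2), (p1, q2))).mpr hmem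
        rw [show Sym2.map (⇑(boxProdComm G H)) s((p1, p2), (p1, q2))
            = s((p2, p1), (q2, p1)) from by rw [Sym2.map_pair_eq]; rfl] at hmem'
        obtain ⟨hb, hEM⟩ := (gside hH hG v u hh).mp hmem'
        exact Or.inl ⟨s(p2, q2), hEM, by rw [Sym2.map_pair_eq, hb]⟩
  · rintro (⟨g, hg, rfl⟩ | ⟨g, hg, rfl⟩)
    · obtain ⟨hge, x, hx⟩ := hg
      have h1 : Sym2.map (fun w => (w, u)) g ∈ EM (H □ G) (v, u) :=
        mem_EM_boxProd hH hG v u hge x hx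
      have h2 := (EM_iso (boxProdComm H G) (v, u) (Sym2.map (fun w => (w, u)) g)).mpr h1
      rw [Sym2.map_map] at h2
      exact h2
    · obtain ⟨hge, x, hx⟩ := hg
      exact mem_EM_boxProd hG hH u v hge x hx
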